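/- Define σ₀(c) := sup{ s ∈ [0,1] : g(c, s) ≥ 0 } for c > 0. Then σ₀ is strictly decreasing: if 0 < c₁ < c₂, then σ₀(c₂) < σ₀(c₁). -/

import Mathlib

open MeasureTheory ProbabilityTheory

/-- The logistic sigmoid `S(t) = 1/(1 + exp(-t))`. -/
noncomputable def S (t : ℝ) : ℝ := 1 / (1 + Real.exp (-t))

/-- The standard Gaussian measure on `ℝ`. -/
noncomputable def γ : Measure ℝ := gaussianReal 0 1

/-- The validation mean `μᵥ(s) := √(2(1 - s²))`. -/
noncomputable def μv (s : ℝ) : ℝ := Real.sqrt (2 * (1 - s ^ 2))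

/-- `g(c, s) := -E_Z[(S(c(μᵥ(s) + s Z)) - 1)(μᵥ(s) + s Z)]` for a standard Gaussian `Z`. -/
noncomputable def g (c s : ℝ) : ℝ :=
  -∫ z, (S (c * (μv s + s * z)) - 1) * (μv s + s * z) ∂γ

/-- `σ₀(c) := sup { s ∈ [0,1] : g(c, s) ≥ 0 }`. -/
noncomputable def σ₀ (c : ℝ) : ℝ := sSup {s : ℝ | s ∈ Set.Icc (0 : ℝ) 1 ∧ 0 ≤ g c s}

/-! ### Auxiliary lemmas -/

section Aux

lemma S_denom_pos (t : ℝ) : 0 < 1 + Real.exp (-t) := by positivity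

lemma S_pos (t : ℝ) : 0 < S t := by
  unfold S; positivity

lemma S_lt_one (t : ℝ) : S t < 1 := by
  unfold S
  rw [div_lt_one (S_denom_pos t)]
  linarith [Real.exp_pos (-t)]

lemma S_strictMono : StrictMono S := by
  intro a b hab
  unfold S
  have h : 1 + Real.exp (-b) < 1 + Real.exp (-a) := by
    have := Real.exp_lt_exp.2 (neg_lt_neg hab)
    linarith
  exact div_lt_div_of_pos_left one_pos (S_denom_pos b) h

lemma S_continuous : Continuous S := by
  apply continuous_const.div
  · exact continuous_const.add (Real.continuous_exp.comp continuous_neg)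
  · intro t; exact (S_denom_pos t).ne'

lemma μv_nonneg (s : ℝ) : 0 ≤ μv s := Real.sqrt_nonneg _

lemma μv_le (s : ℝ) : μv s ≤ Real.sqrt 2 := by
  apply Real.sqrt_le_sqrt
  nlinarith [sq_nonneg s]

lemma μv_continuous : Continuous μv :=
  Real.continuous_sqrt.comp (by continuity)

lemma μv_zero : μv 0 = Real.sqrt 2 := by simp [μv]

lemma μv_one : μv 1 = 0 := by simp [μv]

instance : IsProbabilityMeasure γ := by
  unfold γ; infer_instance

lemma γ_eq : γ = volume.withDensity (gaussianPDF 0 1) :=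
  gaussianReal_of_var_ne_zero 0 one_ne_zero

lemma γ_eq' : γ = volume.withDensity
    (fun x => ((gaussianPDFReal 0 1 x).toNNReal : ENNReal)) := by
  rw [γ_eq]
  rfl

lemma integral_γ_eq (h : ℝ → ℝ) :
    ∫ z, h z ∂γ = ∫ z, h z * gaussianPDFReal 0 1 z := by
  rw [γ_eq', integral_withDensity_eq_integral_smul
    ((measurable_gaussianPDFReal 0 1).real_toNNReal) h]
  congr 1
  ext z
  rw [NNReal.smul_def, Real.coe_toNNReal _ (gaussianPDFReal_nonneg 0 1 z), smul_eq_mul,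
    mul_comm]

lemma integrable_γ_iff {h : ℝ → ℝ} :
    Integrable h γ ↔ Integrable (fun z => h z * gaussianPDFReal 0 1 z) := by
  rw [γ_eq', integrable_withDensity_iff_integrable_smul
    ((measurable_gaussianPDFReal 0 1).real_toNNReal)]
  constructor <;> intro H <;> apply H.congr <;>
    filter_upwards with z <;>
    simp [NNReal.smul_def, Real.coe_toNNReal _ (gaussianPDFReal_nonneg 0 1 z), mul_comm]

lemma γ_singleton (x : ℝ) : γ {x} = 0 := by
  unfold γ
  exact gaussianReal_absolutelyContinuous 0 one_ne_zero (measure_singleton x)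

lemma integrable_abs_γ : Integrable (fun z => |z|) γ := by
  rw [integrable_γ_iff]
  have h1 : Integrable (fun x : ℝ => x * Real.exp (-(1/2 : ℝ) * x ^ 2)) :=
    integrable_mul_exp_neg_mul_sq (by norm_num)
  have h2 : Integrable (fun x : ℝ => x * gaussianPDFReal 0 1 x) := by
    apply (h1.const_mul ((Real.sqrt (2 * Real.pi))⁻¹)).congr
    filter_upwards with x
    simp only [gaussianPDFReal, NNReal.coe_one, mul_one, sub_zero]
    ring_nf
  apply h2.abs.congr
  filter_upwards with x
  rw [abs_mul, abs_of_nonneg (gaussianPDFReal_nonneg 0 1 x)]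

lemma gaussianPDFReal_even (z : ℝ) :
    gaussianPDFReal 0 1 (-z) = gaussianPDFReal 0 1 z := by
  simp [gaussianPDFReal, neg_sq]

lemma Sdiff_pos {c₁ c₂ : ℝ} (h12 : c₁ < c₂) {u : ℝ} (hu : u ≠ 0) :
    0 < (S (c₂ * u) - S (c₁ * u)) * u := by
  rcases lt_or_gt_of_ne hu with h | h
  · have h1 : c₂ * u < c₁ * u := by nlinarith
    have := S_strictMono h1
    nlinarith
  · have h1 : c₁ * u < c₂ * u := by nlinarith
    have := S_strictMono h1
    nlinarith

lemma Sdiff_nonneg {c₁ c₂ : ℝ} (h12 : c₁ < c₂) (u : ℝ) :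
    0 ≤ (S (c₂ * u) - S (c₁ * u)) * u := by
  rcases eq_or_ne u 0 with h | h
  · simp [h]
  · exact le_of_lt (Sdiff_pos h12 h)

/-- The integrand in the definition of `g`. -/
noncomputable def Fc (c s z : ℝ) : ℝ := (S (c * (μv s + s * z)) - 1) * (μv s + s * z)

lemma g_eq (c s : ℝ) : g c s = -∫ z, Fc c s z ∂γ := rfl

lemma abs_S_sub_one_le (t : ℝ) : |S t - 1| ≤ 1 := by
  rw [abs_le]
  constructor <;> nlinarith [S_pos t, S_lt_one t]

lemma Fc_continuous_z (c s : ℝ) : Continuous (fun z => Fc c s z) := by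
  unfold Fc
  apply Continuous.mul _ (by continuity)
  exact (S_continuous.comp (by continuity)).sub continuous_const

lemma Fc_abs_le (c s z : ℝ) : |Fc c s z| ≤ Real.sqrt 2 + |s| * |z| := by
  unfold Fc
  rw [abs_mul]
  calc |S (c * (μv s + s * z)) - 1| * |μv s + s * z|
      ≤ 1 * |μv s + s * z| := by
        apply mul_le_mul_of_nonneg_right (abs_S_sub_one_le _) (abs_nonneg _)
    _ = |μv s + s * z| := one_mul _
    _ ≤ |μv s| + |s * z| := abs_add_le _ _
    _ ≤ Real.sqrt 2 + |s| * |z| := by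
        rw [abs_mul, abs_of_nonneg (μv_nonneg s)]
        exact add_le_add_left (μv_le s) _

lemma integrable_bound (M : ℝ) : Integrable (fun z => Real.sqrt 2 + M * |z|) γ :=
  (integrable_const _).add (integrable_abs_γ.const_mul M)

lemma integrable_Fc (c s : ℝ) : Integrable (fun z => Fc c s z) γ := by
  apply Integrable.mono (integrable_bound |s|)
    (Fc_continuous_z c s).aestronglyMeasurable
  filter_upwards with z
  rw [Real.norm_eq_abs, Real.norm_eq_abs]
  refine (Fc_abs_le c s z).trans (le_abs_self _)

lemma g_continuous (c : ℝ) : Continuous (g c) := by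
  have : Continuous (fun s => ∫ z, Fc c s z ∂γ) := by
    rw [continuous_iff_continuousAt]
    intro s₀
    apply continuousAt_of_dominated (bound := fun z => Real.sqrt 2 + (|s₀| + 1) * |z|)
    · filter_upwards with s
      exact (Fc_continuous_z c s).aestronglyMeasurable
    · filter_upwards [Metric.ball_mem_nhds s₀ one_pos] with s hs
      filter_upwards with z
      rw [Real.norm_eq_abs]
      refine (Fc_abs_le c s z).trans ?_
      have : |s| ≤ |s₀| + 1 := by
        have := abs_sub_abs_le_abs_sub s s₀
        rw [Metric.mem_ball, Real.dist_eq] at hs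
        linarith
      have hz := abs_nonneg z
      nlinarith
    · exact integrable_bound _
    · filter_upwards with z
      apply Continuous.continuousAt
      unfold Fc
      have h1 : Continuous (fun s => μv s + s * z) :=
        μv_continuous.add (continuous_id.mul continuous_const)
      exact ((S_continuous.comp (continuous_const.mul h1)).sub continuous_const).mul h1
  rw [show g c = fun s => -∫ z, Fc c s z ∂γ from funext (g_eq c)]
  exact this.neg

/-- Positivity of the measure of the set where `μv s + s * z ≠ 0`. -/
lemma measure_u_ne_zero_pos (s : ℝ) (hs : s ∈ Set.Icc (0:ℝ) 1) :
    0 < γ {z : ℝ | μv s + s * z ≠ 0} := by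
  have hzero : γ {z : ℝ | μv s + s * z = 0} = 0 := by
    rcases eq_or_ne s 0 with rfl | hs0
    · have : {z : ℝ | μv 0 + 0 * z = 0} = ∅ := by
        ext z
        simp only [Set.mem_setOf_eq, Set.mem_empty_iff_false, iff_false]
        rw [μv_zero]
        have : (0:ℝ) < Real.sqrt 2 := Real.sqrt_pos.2 (by norm_num)
        intro h; linarith
      rw [this]; simp
    · have : {z : ℝ | μv s + s * z = 0} = {-(μv s) / s} := by
        ext z
        simp only [Set.mem_setOf_eq, Set.mem_singleton_iff]
        rw [eq_div_iff hs0]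
        constructor <;> intro h <;> linarith [mul_comm z s]
      rw [this]
      exact γ_singleton _
  rw [pos_iff_ne_zero]
  intro hcon
  have huniv : (γ Set.univ : ENNReal) = 1 := measure_univ
  have : (γ Set.univ : ENNReal) ≤ γ {z : ℝ | μv s + s * z = 0} + γ {z : ℝ | μv s + s * z ≠ 0} := by
    have : (Set.univ : Set ℝ) = {z : ℝ | μv s + s * z = 0} ∪ {z : ℝ | μv s + s * z ≠ 0} := by
      ext z; by_cases h : μv s + s * z = 0 <;> simp [h]
    rw [this]
    exact measure_union_le _ _
  rw [huniv, hzero, hcon, add_zero] at this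
  simp at this

/-- Strict monotonicity of `g` in `c`. -/
lemma g_strict_anti {c₁ c₂ : ℝ} (h12 : c₁ < c₂) {s : ℝ} (hs : s ∈ Set.Icc (0:ℝ) 1) :
    g c₂ s < g c₁ s := by
  set D : ℝ → ℝ := fun z =>
    (S (c₂ * (μv s + s * z)) - S (c₁ * (μv s + s * z))) * (μv s + s * z) with hD
  have hDeq : ∀ z, D z = Fc c₂ s z - Fc c₁ s z := by
    intro z; unfold Fc; rw [hD]; ring
  have hDint : Integrable D γ := by
    apply ((integrable_Fc c₂ s).sub (integrable_Fc c₁ s)).congr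
    filter_upwards with z
    exact (hDeq z).symm
  have hnonneg : ∀ z, 0 ≤ D z := fun z => Sdiff_nonneg h12 (μv s + s * z)
  have hposne : ∀ z, μv s + s * z ≠ 0 → D z ≠ 0 := fun z hz =>
    ne_of_gt (Sdiff_pos h12 hz)
  have hpos : 0 < ∫ z, D z ∂γ := by
    rw [integral_pos_iff_support_of_nonneg hnonneg hDint]
    apply lt_of_lt_of_le (measure_u_ne_zero_pos s hs)
    apply measure_mono
    intro z hz
    exact hposne z hz
  have : ∫ z, D z ∂γ = (∫ z, Fc c₂ s z ∂γ) - ∫ z, Fc c₁ s z ∂γ := by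
    rw [← integral_sub (integrable_Fc c₂ s) (integrable_Fc c₁ s)]
    apply integral_congr_ae
    filter_upwards with z
    exact hDeq z
  rw [this] at hpos
  rw [g_eq, g_eq]
  linarith

/-- `g c 0 ≥ 0`. -/
lemma g_nonneg_at_zero (c : ℝ) : 0 ≤ g c 0 := by
  have : g c 0 = -((S (c * (μv 0 + 0 * 0)) - 1) * (μv 0 + 0 * 0)) := by
    rw [g_eq]
    congr 1
    have : (fun z : ℝ => Fc c 0 z) =
        fun _ : ℝ => (S (c * (μv 0 + 0 * 0)) - 1) * (μv 0 + 0 * 0) := by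
      funext z; unfold Fc; norm_num
    rw [this, integral_const]
    simp
  rw [this]
  have h1 := S_lt_one (c * (μv 0 + 0 * 0))
  have h2 : (0:ℝ) ≤ μv 0 + 0 * 0 := by simpa using μv_nonneg 0
  nlinarith

/-- `g c 1 < 0` for `c > 0`. -/
lemma g_neg_at_one {c : ℝ} (hc : 0 < c) : g c 1 < 0 := by
  rw [g_eq]
  rw [neg_lt, neg_zero]
  -- goal: 0 < ∫ z, Fc c 1 z ∂γ
  set φ : ℝ → ℝ := fun z => Fc c 1 z * gaussianPDFReal 0 1 z with hφ
  have hint : ∫ z, Fc c 1 z ∂γ = ∫ z, φ z := integral_γ_eq _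
  have hφint : Integrable φ := integrable_γ_iff.1 (integrable_Fc c 1)
  have hφnegint : Integrable (fun z => φ (-z)) := hφint.comp_neg
  have hsym : ∫ z, φ (-z) = ∫ z, φ z := integral_neg_eq_self φ _
  -- ψ z = φ z + φ (-z)
  set ψ : ℝ → ℝ := fun z => φ z + φ (-z) with hψ
  have hψeq : ∀ z, ψ z = (S (c * z) - S (c * (-z))) * z * gaussianPDFReal 0 1 z := by
    intro z
    rw [hψ, hφ]
    simp only
    unfold Fc
    rw [gaussianPDFReal_even, μv_one]
    ring_nf
  have hcz : ∀ z : ℝ, c * (-z) = (-c) * z := fun z => by ring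
  have hψnonneg : ∀ z, 0 ≤ ψ z := by
    intro z
    rw [hψeq, hcz]
    have hpdf := gaussianPDFReal_nonneg 0 1 z
    have := Sdiff_nonneg (show -c < c by linarith) z
    nlinarith
  have hψne : ∀ z, z ≠ 0 → ψ z ≠ 0 := by
    intro z hz
    rw [hψeq, hcz]
    have hpdf := gaussianPDFReal_pos 0 1 z one_ne_zero
    have := Sdiff_pos (show -c < c by linarith) hz
    positivity
  have hψint : Integrable ψ := hφint.add hφnegint
  have hψpos : 0 < ∫ z, ψ z := by
    rw [integral_pos_iff_support_of_nonneg hψnonneg hψint]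
    have hsub : {z : ℝ | z ≠ 0} ⊆ Function.support ψ := fun z hz => hψne z hz
    apply lt_of_lt_of_le _ (measure_mono hsub)
    rw [pos_iff_ne_zero]
    intro hcon
    have h1 : (volume (Set.univ : Set ℝ)) ≤ volume ({(0:ℝ)}) + volume {z : ℝ | z ≠ 0} := by
      have : (Set.univ : Set ℝ) = {(0:ℝ)} ∪ {z : ℝ | z ≠ 0} := by
        ext z; by_cases h : z = 0 <;> simp [h]
      rw [this]
      exact measure_union_le _ _
    rw [hcon, Real.volume_singleton, add_zero, Real.volume_univ] at h1
    simp at h1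
  have : ∫ z, ψ z = 2 * ∫ z, φ z := by
    rw [hψ, integral_add hφint hφnegint, hsym]
    ring
  rw [hint]
  linarith [hψpos, this ▸ hψpos]

/-- Facts about the defining set of `σ₀`. -/
lemma σ₀_set_nonempty (c : ℝ) :
    {s : ℝ | s ∈ Set.Icc (0 : ℝ) 1 ∧ 0 ≤ g c s}.Nonempty :=
  ⟨0, ⟨Set.left_mem_Icc.2 zero_le_one, g_nonneg_at_zero c⟩⟩

lemma σ₀_set_bddAbove (c : ℝ) :
    BddAbove {s : ℝ | s ∈ Set.Icc (0 : ℝ) 1 ∧ 0 ≤ g c s} :=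
  ⟨1, fun s hs => hs.1.2⟩

lemma σ₀_set_closed (c : ℝ) :
    IsClosed {s : ℝ | s ∈ Set.Icc (0 : ℝ) 1 ∧ 0 ≤ g c s} := by
  have : {s : ℝ | s ∈ Set.Icc (0 : ℝ) 1 ∧ 0 ≤ g c s}
      = Set.Icc (0 : ℝ) 1 ∩ {s : ℝ | 0 ≤ g c s} := rfl
  rw [this]
  exact isClosed_Icc.inter (isClosed_le continuous_const (g_continuous c))

lemma σ₀_mem (c : ℝ) : σ₀ c ∈ {s : ℝ | s ∈ Set.Icc (0 : ℝ) 1 ∧ 0 ≤ g c s} :=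
  (σ₀_set_closed c).csSup_mem (σ₀_set_nonempty c) (σ₀_set_bddAbove c)

end Aux

/-- The threshold `σ₀` is strictly decreasing: if `0 < c₁ < c₂` then `σ₀(c₂) < σ₀(c₁)`. -/
theorem stmt15 (c₁ c₂ : ℝ) (hc₁ : 0 < c₁) (hc : c₁ < c₂) : σ₀ c₂ < σ₀ c₁ := by
  obtain ⟨hs₂Icc, hs₂g⟩ := σ₀_mem c₂
  set s₂ := σ₀ c₂ with hs₂
  -- s₂ < 1
  have hs₂lt1 : s₂ < 1 := by
    rcases lt_or_eq_of_le hs₂Icc.2 with h | h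
    · exact h
    · exfalso
      have := g_neg_at_one (lt_trans hc₁ hc)
      rw [h] at hs₂g
      linarith
  -- g c₁ s₂ > 0
  have hgpos : 0 < g c₁ s₂ := lt_of_le_of_lt hs₂g (g_strict_anti hc hs₂Icc)
  -- by continuity, find s > s₂ with g c₁ s ≥ 0 and s ∈ [0,1]
  have hcont : ContinuousAt (g c₁) s₂ := (g_continuous c₁).continuousAt
  obtain ⟨ε, hε, hball⟩ := Metric.eventually_nhds_iff.1
    (hcont (Ioi_mem_nhds hgpos) : ∀ᶠ s in nhds s₂, g c₁ s ∈ Set.Ioi 0)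
  set s := min (s₂ + ε / 2) ((s₂ + 1) / 2) with hs
  have hs_gt : s₂ < s := by
    apply lt_min <;> linarith
  have hs_le1 : s ≤ 1 := le_trans (min_le_right _ _) (by linarith)
  have hs_near : dist s s₂ < ε := by
    rw [Real.dist_eq, abs_of_pos (by linarith : (0:ℝ) < s - s₂)]
    have : s ≤ s₂ + ε / 2 := min_le_left _ _
    linarith
  have hgs : 0 ≤ g c₁ s := le_of_lt (hball hs_near)
  have hmem : s ∈ {s : ℝ | s ∈ Set.Icc (0 : ℝ) 1 ∧ 0 ≤ g c₁ s} :=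
    ⟨⟨le_trans hs₂Icc.1 (le_of_lt hs_gt), hs_le1⟩, hgs⟩
  calc σ₀ c₂ = s₂ := rfl
    _ < s := hs_gt
    _ ≤ σ₀ c₁ := le_csSup (σ₀_set_bddAbove c₁) hmem
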